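/- Let F be a field of characteristic zero, and let C be a cubic form over F. If C has a non-trivial zero over some quadratic extension of F, then C has a non-trivial zero over F. -/

import Mathlib

open Polynomial

/-- Evaluating a homogeneous polynomial at a scalar multiple. -/
lemma eval_smul_of_isHomogeneous {σ R : Type*} [CommSemiring R]
    {C : MvPolynomial σ R} {m : ℕ} (h : C.IsHomogeneous m) (c : R) (x : σ → R) :
    MvPolynomial.eval (fun i => c * x i) C = c ^ m * MvPolynomial.eval x C := by
  rw [MvPolynomial.eval_eq, MvPolynomial.eval_eq, Finset.mul_sum]
  refine Finset.sum_congr rfl fun d hd => ?_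
  have hm : ∑ i ∈ d.support, d i = m := by
    have := h (MvPolynomial.mem_support_iff.mp hd)
    simpa [Finsupp.weight_apply, Finsupp.sum] using this
  rw [← hm, Finset.prod_congr rfl (fun i _ => mul_pow c (x i) (d i)),
    Finset.prod_mul_distrib, Finset.prod_pow_eq_pow_sum]
  ring

lemma coeff_prod_pow {ι R : Type*} [CommSemiring R] (s : Finset ι) (f : ι → Polynomial R)
    (d : ι → ℕ) (h : ∀ i ∈ s, (f i).natDegree ≤ 1) :
    (∏ i ∈ s, f i ^ d i).coeff (∑ i ∈ s, d i) = ∏ i ∈ s, (f i).coeff 1 ^ d i := by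
  classical
  induction s using Finset.induction with
  | empty => simp
  | @insert a s ha ih =>
    rw [Finset.prod_insert ha, Finset.sum_insert ha, Finset.prod_insert ha]
    have h1 : (f a ^ d a).natDegree ≤ d a := by
      simpa using Polynomial.natDegree_pow_le.trans
        (by simpa [mul_comm] using Nat.mul_le_mul_left (d a) (h a (Finset.mem_insert_self a s)))
    have h2 : (∏ i ∈ s, f i ^ d i).natDegree ≤ ∑ i ∈ s, d i := by
      refine (Polynomial.natDegree_prod_le _ _).trans (Finset.sum_le_sum fun i hi => ?_)
      simpa using Polynomial.natDegree_pow_le.trans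
        (by simpa [mul_comm] using Nat.mul_le_mul_left (d i) (h i (Finset.mem_insert_of_mem hi)))
    rw [Polynomial.coeff_mul_add_eq_of_natDegree_le h1 h2,
      ih (fun i hi => h i (Finset.mem_insert_of_mem hi))]
    congr 1
    have := Polynomial.coeff_pow_of_natDegree_le (h a (Finset.mem_insert_self a s))
      (m := d a)
    simpa [mul_one] using this

/-- A cubic form over a field of characteristic zero with a non-trivial zero
over a quadratic extension has a non-trivial zero over the base field. -/
theorem cubic_form_quadratic_descent
    (F : Type*) [Field F] [CharZero F]
    (E : Type*) [Field E] [Algebra F E] [FiniteDimensional F E]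
    (hdeg : Module.finrank F E = 2)
    (n : ℕ) (C : MvPolynomial (Fin n) F) (hC : C.IsHomogeneous 3)
    (hzero : ∃ x : Fin n → E, x ≠ 0 ∧
      MvPolynomial.eval x (MvPolynomial.map (algebraMap F E) C) = 0) :
    ∃ x : Fin n → F, x ≠ 0 ∧ MvPolynomial.eval x C = 0 := by
  obtain ⟨z, hz0, hzC⟩ := hzero
  -- choose θ ∈ E \ F
  obtain ⟨θ, hθ⟩ : ∃ θ : E, θ ∉ (algebraMap F E).range := by
    by_contra h
    push_neg at h
    have : (⊥ : Subalgebra F E) = ⊤ := by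
      apply top_unique
      intro e _
      exact Algebra.mem_bot.mpr (h e)
    rw [Subalgebra.bot_eq_top_iff_finrank_eq_one] at this
    omega
  -- {1, θ} spans E
  have hli : LinearIndependent F ![1, θ] := by
    rw [LinearIndependent.pair_iff]
    intro s t hst
    have hst' : algebraMap F E s + algebraMap F E t * θ = 0 := by
      rw [Algebra.smul_def, mul_one, Algebra.smul_def] at hst
      exact hst
    by_cases ht : t = 0
    · subst ht
      rw [map_zero, zero_mul, add_zero] at hst'
      exact ⟨(algebraMap F E).injective (by simpa using hst'), rfl⟩
    · exfalso
      have htE : (algebraMap F E) t ≠ 0 := fun h =>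
        ht ((algebraMap F E).injective (by simpa using h))
      refine hθ ⟨-s / t, ?_⟩
      rw [map_div₀, div_eq_iff htE, map_neg]
      linear_combination -hst'
  have hspan : Submodule.span F ({1, θ} : Set E) = ⊤ := by
    apply Submodule.eq_top_of_finrank_eq
    have h2 : Module.finrank F (Submodule.span F (Set.range ![1, θ])) = 2 := by
      rw [finrank_span_eq_card hli]; simp
    rw [show ({1, θ} : Set E) = Set.range ![1, θ] from by
      ext e
      simp [Matrix.range_cons, Matrix.range_empty, or_comm]]
    rw [h2, hdeg]
  have hz' : ∀ i, ∃ a b : F, algebraMap F E a + algebraMap F E b * θ = z i := by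
    intro i
    have : z i ∈ Submodule.span F ({1, θ} : Set E) := hspan ▸ Submodule.mem_top
    obtain ⟨a, b, hab⟩ := Submodule.mem_span_pair.mp this
    exact ⟨a, b, by rw [← hab]; rw [Algebra.smul_def, Algebra.smul_def, mul_one]⟩
  choose x y hxy using hz'
  -- the one-variable polynomial p(T) = C(x + T y)
  set L : Fin n → Polynomial F := fun i => Polynomial.C (x i) + Polynomial.X * Polynomial.C (y i)
    with hL
  set p : Polynomial F := MvPolynomial.eval₂ Polynomial.C L C with hp
  have hLdeg : ∀ i, (L i).natDegree ≤ 1 := by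
    intro i
    have h1 : (Polynomial.X * Polynomial.C (y i)).natDegree ≤ 1 :=
      (Polynomial.natDegree_mul_le).trans (by simp)
    have h1' : (Polynomial.C (y i) * Polynomial.X).natDegree ≤ 1 :=
      (Polynomial.natDegree_mul_le).trans (by simp)
    exact (Polynomial.natDegree_add_le _ _).trans (by simp [h1, h1'])
  have hLcoeff : ∀ i, (L i).coeff 1 = y i := by
    intro i
    simp [hL, Polynomial.coeff_C]
  -- evaluation of p at θ
  have haeval : Polynomial.aeval θ p = 0 := by
    rw [hp]
    have := MvPolynomial.eval₂_comp_left (Polynomial.aeval θ : Polynomial F →ₐ[F] E).toRingHom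
      Polynomial.C L C
    simp only [AlgHom.toRingHom_eq_coe, RingHom.coe_coe] at this
    rw [this]
    have h1 : (↑(Polynomial.aeval θ : Polynomial F →ₐ[F] E) : Polynomial F →+* E).comp
        (Polynomial.C : F →+* Polynomial F) = algebraMap F E := by
      ext a
      simp
    have h2 : (⇑(Polynomial.aeval θ : Polynomial F →ₐ[F] E)) ∘ L = z := by
      funext i
      simp [hL, ← hxy i]
    rw [h1, h2, ← MvPolynomial.eval_map]
    exact hzC
  -- evaluation of p at points of F
  have hevalF : ∀ t : F, p.eval t = MvPolynomial.eval (fun i => x i + t * y i) C := by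
    intro t
    rw [hp]
    have := MvPolynomial.eval₂_comp_left (Polynomial.evalRingHom t) Polynomial.C L C
    simp only [Polynomial.coe_evalRingHom] at this
    rw [this]
    have h1 : (Polynomial.evalRingHom t).comp (Polynomial.C : F →+* Polynomial F) =
        RingHom.id F := RingHom.ext fun a => by
      simp only [RingHom.comp_apply, Polynomial.coe_evalRingHom, Polynomial.eval_C,
        RingHom.id_apply]
    have h2 : (Polynomial.eval t) ∘ L = fun i => x i + t * y i := by
      funext i
      simp only [Function.comp_apply, hL, Polynomial.eval_add, Polynomial.eval_C,
        Polynomial.eval_mul, Polynomial.eval_X]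
    rw [h1, h2, MvPolynomial.eval₂_id]
  -- eval over E through the algebra map
  have hevalmap : ∀ w : Fin n → F,
      MvPolynomial.eval (fun i => algebraMap F E (w i)) (MvPolynomial.map (algebraMap F E) C)
        = algebraMap F E (MvPolynomial.eval w C) := by
    intro w
    rw [MvPolynomial.eval_map]
    have := MvPolynomial.eval₂_comp_left (algebraMap F E) (RingHom.id F) w C
    simpa [MvPolynomial.eval₂_id, Function.comp_def] using this.symm
  by_cases hy0 : y = 0
  · -- z is already defined over F
    have hzx : z = fun i => algebraMap F E (x i) := by
      funext i
      rw [← hxy i, hy0]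
      simp
    refine ⟨x, ?_, ?_⟩
    · intro hx0
      apply hz0
      funext i
      rw [hzx, hx0]
      simp
    · have := hzC
      rw [hzx, hevalmap] at this
      exact (algebraMap F E).injective (by simpa using this)
  by_cases hyC : MvPolynomial.eval y C = 0
  · exact ⟨y, hy0, hyC⟩
  -- degree bookkeeping
  have hdegsup : ∀ d ∈ C.support, ∑ i ∈ d.support, d i = 3 := by
    intro d hd
    have := hC (MvPolynomial.mem_support_iff.mp hd)
    simpa [Finsupp.weight_apply, Finsupp.sum] using this
  have hpdeg : p.natDegree ≤ 3 := by
    rw [hp, MvPolynomial.eval₂_eq]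
    refine Polynomial.natDegree_sum_le_of_forall_le _ _ fun d hd => ?_
    refine (Polynomial.natDegree_mul_le).trans ?_
    have : (∏ i ∈ d.support, L i ^ d i).natDegree ≤ 3 := by
      refine (Polynomial.natDegree_prod_le _ _).trans ?_
      rw [← hdegsup d hd]
      refine Finset.sum_le_sum fun i _ => ?_
      calc (L i ^ d i).natDegree ≤ d i * (L i).natDegree := Polynomial.natDegree_pow_le
        _ ≤ d i * 1 := Nat.mul_le_mul_left _ (hLdeg i)
        _ = d i := mul_one _
    simpa using this
  have hcoeff3 : p.coeff 3 = MvPolynomial.eval y C := by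
    rw [hp, MvPolynomial.eval₂_eq, MvPolynomial.eval_eq, Polynomial.finset_sum_coeff]
    refine Finset.sum_congr rfl fun d hd => ?_
    rw [Polynomial.coeff_C_mul, ← hdegsup d hd,
      coeff_prod_pow _ _ _ (fun i _ => hLdeg i)]
    congr 1
    exact Finset.prod_congr rfl fun i _ => by rw [hLcoeff]
  have hp3 : p.coeff 3 ≠ 0 := by rw [hcoeff3]; exact hyC
  have hpdeg3 : p.natDegree = 3 :=
    le_antisymm hpdeg (Polynomial.le_natDegree_of_ne_zero hp3)
  have hpne : p ≠ 0 := fun h => hp3 (by simp [h])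
  -- minimal polynomial of θ
  have hint : IsIntegral F θ := IsIntegral.of_finite F θ
  have hq2 : (minpoly F θ).natDegree = 2 := by
    have hle : (minpoly F θ).natDegree ≤ 2 := hdeg ▸ minpoly.natDegree_le θ
    have h2le : 2 ≤ (minpoly F θ).natDegree := (minpoly.two_le_natDegree_iff hint).mpr hθ
    omega
  obtain ⟨r, hpr⟩ : minpoly F θ ∣ p := minpoly.dvd F θ haeval
  have hrne : r ≠ 0 := by
    rintro rfl
    rw [mul_zero] at hpr
    exact hpne hpr
  have hrdeg : r.natDegree = 1 := by
    have := Polynomial.natDegree_mul (minpoly.ne_zero hint) hrne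
    rw [← hpr, hpdeg3, hq2] at this
    omega
  -- root of r
  set a : F := r.coeff 1 with ha
  have hane : a ≠ 0 := by
    have : r.coeff 1 = r.leadingCoeff := by rw [Polynomial.leadingCoeff, hrdeg]
    rw [ha, this]
    exact Polynomial.leadingCoeff_ne_zero.mpr hrne
  set t0 : F := -(r.coeff 0) / a with ht0
  have hrt0 : r.eval t0 = 0 := by
    have hr1 : r = Polynomial.C (r.coeff 1) * Polynomial.X + Polynomial.C (r.coeff 0) :=
      Polynomial.eq_X_add_C_of_natDegree_le_one hrdeg.le
    rw [hr1]
    simp only [Polynomial.eval_add, Polynomial.eval_mul, Polynomial.eval_C, Polynomial.eval_X]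
    rw [ht0, ha]
    field_simp [show r.coeff 1 ≠ 0 from hane]
    ring
  have hpt0 : MvPolynomial.eval (fun i => x i + t0 * y i) C = 0 := by
    rw [← hevalF, hpr]
    simp [hrt0]
  by_cases hw : (fun i => x i + t0 * y i) = 0
  · -- then z = (θ - t0) • y, forcing C(y) = 0
    exfalso
    have hθt : θ - algebraMap F E t0 ≠ 0 := by
      intro h
      exact hθ ⟨t0, (sub_eq_zero.mp h).symm⟩
    have hzy : z = fun i => (θ - algebraMap F E t0) * algebraMap F E (y i) := by
      funext i
      have hwi : x i + t0 * y i = 0 := congrFun hw i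
      have hxi : x i = -(t0 * y i) := by linear_combination hwi
      rw [← hxy i, hxi]
      rw [map_neg, map_mul]
      ring
    have h1 := hzC
    rw [hzy, eval_smul_of_isHomogeneous (hC.map (algebraMap F E))] at h1
    have h2 : MvPolynomial.eval (fun i => algebraMap F E (y i))
        (MvPolynomial.map (algebraMap F E) C) = 0 := by
      rcases mul_eq_zero.mp h1 with h | h
      · exact absurd h (pow_ne_zero 3 hθt)
      · exact h
    rw [hevalmap] at h2
    exact hyC ((algebraMap F E).injective (by simpa using h2))
  · exact ⟨_, hw, hpt0⟩
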